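/- Let I be the two-sided ideal of B generated by x_1,…,x_{n−1}. Then B/I is isomorphic as a k-algebra to the commutative polynomial algebra k[X,Z] in two variables, via x_n ↦ X and z ↦ Z. -/

import Mathlib

/-!
STATEMENT 11: Let I be the two-sided ideal of B generated by x_1,…,x_{n−1}.
Then B/I is isomorphic as a k-algebra to the commutative polynomial algebra
k[X,Z] in two variables, via x_n ↦ X and z ↦ Z.
-/

open TensorProduct Matrix

noncomputable section

variable (k : Type) [Field k] (n : ℕ)

/-- The standard basis of `V = k^n`. -/
def x (i : Fin n) : Fin n → k := Pi.single i 1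

/-- `V̂ = V ⊕ k·z`. -/
abbrev Vhat (k : Type) [Field k] (n : ℕ) := (Fin n → k) × k

/-- The inclusion `V → V̂`. -/
def inc : (Fin n → k) →ₗ[k] Vhat k n := LinearMap.inl k (Fin n → k) k

/-- The extra degree-one generator `z ∈ V̂`. -/
def zv : Vhat k n := (0, 1)

/-- The multiplication embedding `V̂ ⊗ V̂ → T(V̂)`. -/
def emb2 : (Vhat k n) ⊗[k] (Vhat k n) →ₗ[k] TensorAlgebra k (Vhat k n) :=
  LinearMap.mul' k (TensorAlgebra k (Vhat k n)) ∘ₗ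
    TensorProduct.map (TensorAlgebra.ι k) (TensorAlgebra.ι k)

/-- The multiplication embedding `V ⊗ V → T(V)`. -/
def embV : (Fin n → k) ⊗[k] (Fin n → k) →ₗ[k] TensorAlgebra k (Fin n → k) :=
  LinearMap.mul' k (TensorAlgebra k (Fin n → k)) ∘ₗ
    TensorProduct.map (TensorAlgebra.ι k) (TensorAlgebra.ι k)

variable (M : Matrix (Fin n) (Fin n) k)

/-- The relation `r = Σ m_ij x_i ⊗ x_j` as an element of `T(V)`. -/
def rTV : TensorAlgebra k (Fin n → k) :=
  ∑ i : Fin n, ∑ j : Fin n,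
    M i j • (TensorAlgebra.ι k (x k n i) * TensorAlgebra.ι k (x k n j))

/-- The relation `r` viewed inside `T(V̂)`. -/
def rhat : TensorAlgebra k (Vhat k n) :=
  ∑ i : Fin n, ∑ j : Fin n,
    M i j • (TensorAlgebra.ι k (inc k n (x k n i)) * TensorAlgebra.ι k (inc k n (x k n j)))

variable (δ₀ : (Fin n → k) →ₗ[k] (Fin n → k) ⊗[k] (Fin n → k))

/-- The Ore relation `r_i = z⊗x_i − x_i⊗z − δ(x_i)` inside `T(V̂)`. -/
def relz (i : Fin n) : TensorAlgebra k (Vhat k n) :=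
  TensorAlgebra.ι k (zv k n) * TensorAlgebra.ι k (inc k n (x k n i))
    - TensorAlgebra.ι k (inc k n (x k n i)) * TensorAlgebra.ι k (zv k n)
    - emb2 k n (TensorProduct.map (inc k n) (inc k n) (δ₀ (x k n i)))

/-- The defining relations of `B = T(V̂)/⟨r, r₁, …, r_n⟩`. -/
def OreRel (a b : TensorAlgebra k (Vhat k n)) : Prop :=
  (a = rhat k n M ∨ ∃ i : Fin n, a = relz k n δ₀ i) ∧ b = 0

/-- `B = A[z;δ̄] ≅ T(V̂)/⟨r, r₁, …, r_n⟩`. -/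
abbrev B := RingQuot (OreRel k n M δ₀)

/-- The projection `π : T(V̂) → B`. -/
def πB : TensorAlgebra k (Vhat k n) →ₐ[k] B k n M δ₀ :=
  RingQuot.mkAlgHom k (OreRel k n M δ₀)

/-- The standard `n×n` anti-symmetric matrix (`n` even), with `m_{i,n+1−i} = 1`
for `1 ≤ i ≤ n/2`, `m_{i,n+1−i} = −1` for `n/2 < i ≤ n` and all other
entries `0` (here written with `0`-based indices). -/
def Mstd (m : ℕ) (hn : n = 2 * m) : Matrix (Fin n) (Fin n) k :=
  fun i j => if (i : ℕ) + (j : ℕ) + 1 = n then (if (i : ℕ) < m then 1 else -1) else 0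

/-- The image of the generator `x_i` in `B`. -/
def xB (i : Fin n) : B k n M δ₀ :=
  πB k n M δ₀ (TensorAlgebra.ι k (inc k n (x k n i)))

/-- The image of `z` in `B`. -/
def zB : B k n M δ₀ := πB k n M δ₀ (TensorAlgebra.ι k (zv k n))

/-- The relations defining `B/I`, `I = ⟨x_1, …, x_{n−1}⟩`. -/
def RelI (a b : B k n M δ₀) : Prop :=
  (∃ i : Fin n, (i : ℕ) < n - 1 ∧ a = xB k n M δ₀ i) ∧ b = 0

def fLin (xn : Fin n) : Vhat k n →ₗ[k] MvPolynomial (Fin 2) k where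
  toFun v := v.1 xn • MvPolynomial.X 0 + v.2 • MvPolynomial.X 1
  map_add' a b := by
    simp only [Prod.fst_add, Prod.snd_add, Pi.add_apply, add_smul]
    abel
  map_smul' c v := by
    simp only [Prod.smul_fst, Prod.smul_snd, Pi.smul_apply, smul_eq_mul, mul_smul,
      RingHom.id_apply, smul_add]

def phiT (xn : Fin n) : TensorAlgebra k (Vhat k n) →ₐ[k] MvPolynomial (Fin 2) k :=
  TensorAlgebra.lift k (fLin k n xn)

lemma phiT_x (xn i : Fin n) :
    phiT k n xn (TensorAlgebra.ι k (inc k n (x k n i))) =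
      (if xn = i then (1:k) else 0) • MvPolynomial.X 0 := by
  simp [phiT, fLin, inc, x, TensorAlgebra.lift_ι_apply, Pi.single_apply]

lemma phiT_z (xn : Fin n) :
    phiT k n xn (TensorAlgebra.ι k (zv k n)) = MvPolynomial.X 1 := by
  simp [phiT, fLin, zv, TensorAlgebra.lift_ι_apply]

lemma phiT_sum (xn : Fin n) (c : Fin n → Fin n → k) :
    (∑ i : Fin n, ∑ j : Fin n, c i j •
      (phiT k n xn (TensorAlgebra.ι k (inc k n (x k n i))) *
       phiT k n xn (TensorAlgebra.ι k (inc k n (x k n j))))) =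
    c xn xn • (MvPolynomial.X 0 * MvPolynomial.X 0) := by
  simp only [phiT_x, smul_mul_smul_comm, mul_ite, ite_mul, one_mul, mul_one, mul_zero, zero_mul,
    smul_smul]
  simp [Finset.sum_ite_eq, ite_smul]

lemma emb2_tmul (u w : Vhat k n) :
    emb2 k n (u ⊗ₜ[k] w) = TensorAlgebra.ι k u * TensorAlgebra.ι k w := by
  simp [emb2]

set_option maxHeartbeats 1000000 in
theorem quotient_by_xi_is_polynomial_ring
    (m : ℕ) (hm : 2 ≤ m) (hn : n = 2 * m)
    (hM : M = Mstd k n m hn)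
    (δ : TensorAlgebra k (Fin n → k) →ₗ[k] TensorAlgebra k (Fin n → k))
    (hLeib : ∀ a b, δ (a * b) = δ a * b + a * δ b)
    (hδι : ∀ v : Fin n → k, δ (TensorAlgebra.ι k v) = embV k n (δ₀ v))
    (hδr : δ (rTV k n M) = 0)
    (K : Fin n → Fin n → Fin n → k)
    (hK : ∀ i, δ₀ (x k n i) = ∑ s : Fin n, ∑ t : Fin n, K i s t • (x k n s ⊗ₜ x k n t))
    (xn : Fin n) (hxn : (xn : ℕ) = n - 1)
    (hKnn : ∀ i : Fin n, K i xn xn = 0) :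
    ∃ e : RingQuot (RelI k n M δ₀) ≃ₐ[k] MvPolynomial (Fin 2) k,
      e (RingQuot.mkAlgHom k (RelI k n M δ₀) (xB k n M δ₀ xn)) = MvPolynomial.X 0
      ∧ e (RingQuot.mkAlgHom k (RelI k n M δ₀) (zB k n M δ₀)) = MvPolynomial.X 1 := by
  classical
  have hn4 : 4 ≤ n := by omega
  have hMxn : M xn xn = 0 := by
    rw [hM]; unfold Mstd; rw [if_neg]; omega
  -- the map phiT kills the Ore relations
  have hphiemb : ∀ i : Fin n,
      phiT k n xn (emb2 k n (TensorProduct.map (inc k n) (inc k n) (δ₀ (x k n i)))) = 0 := by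
    intro i
    rw [hK i]
    simp only [map_sum, _root_.map_smul, TensorProduct.map_tmul, emb2_tmul, _root_.map_mul]
    rw [phiT_sum, hKnn, zero_smul]
  have hrelOre : ∀ ⦃a b : TensorAlgebra k (Vhat k n)⦄, OreRel k n M δ₀ a b →
      phiT k n xn a = phiT k n xn b := by
    rintro a b ⟨h | ⟨i, rfl⟩, rfl⟩
    · subst h
      rw [map_zero]
      unfold rhat
      simp only [map_sum, _root_.map_smul, _root_.map_mul]
      refine (phiT_sum k n xn M).trans ?_; rw [hMxn, zero_smul]
    · rw [map_zero]
      unfold relz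
      simp only [map_sub, _root_.map_mul, phiT_x, phiT_z, hphiemb, sub_zero]
      rw [mul_smul_comm, smul_mul_assoc, mul_comm, sub_self]
  let F1 : B k n M δ₀ →ₐ[k] MvPolynomial (Fin 2) k :=
    RingQuot.liftAlgHom k ⟨phiT k n xn, hrelOre⟩
  have hF1 : ∀ t, F1 (πB k n M δ₀ t) = phiT k n xn t := fun t =>
    RingQuot.liftAlgHom_mkAlgHom_apply k _ _ t
  have hF1x : ∀ i, F1 (xB k n M δ₀ i) = (if xn = i then (1:k) else 0) • MvPolynomial.X 0 := by
    intro i; rw [xB, hF1, phiT_x]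
  have hrelI : ∀ ⦃a b : B k n M δ₀⦄, RelI k n M δ₀ a b → F1 a = F1 b := by
    rintro a b ⟨⟨i, hi, rfl⟩, rfl⟩
    rw [map_zero, hF1x, if_neg, zero_smul]
    rintro rfl; omega
  let F : RingQuot (RelI k n M δ₀) →ₐ[k] MvPolynomial (Fin 2) k :=
    RingQuot.liftAlgHom k ⟨F1, hrelI⟩
  let mkI := RingQuot.mkAlgHom k (RelI k n M δ₀)
  let Ψ : TensorAlgebra k (Vhat k n) →ₐ[k] RingQuot (RelI k n M δ₀) :=
    mkI.comp (πB k n M δ₀)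
  have hF : ∀ b, F (mkI b) = F1 b := fun b => RingQuot.liftAlgHom_mkAlgHom_apply k _ _ b
  set u : RingQuot (RelI k n M δ₀) := mkI (xB k n M δ₀ xn) with hu
  set zz : RingQuot (RelI k n M δ₀) := mkI (zB k n M δ₀) with hzz
  have hFu : F u = MvPolynomial.X 0 := by
    rw [hu, hF, hF1x, if_pos rfl, one_smul]
  have hFz : F zz = MvPolynomial.X 1 := by
    rw [hzz, hF, zB, hF1, phiT_z]
  -- vanishing of the other generators
  have hx0 : ∀ i : Fin n, i ≠ xn → mkI (xB k n M δ₀ i) = 0 := by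
    intro i hi
    have h1 : (i : ℕ) < n - 1 := by
      have h2 : (i:ℕ) < n := i.isLt
      have h3 : (i:ℕ) ≠ n - 1 := fun h => hi (Fin.ext (by omega))
      omega
    have := RingQuot.mkAlgHom_rel k (s := RelI k n M δ₀) ⟨⟨i, h1, rfl⟩, rfl⟩
    simpa using this
  -- the relz relation in B
  have hzx : ∀ i, zB k n M δ₀ * xB k n M δ₀ i - xB k n M δ₀ i * zB k n M δ₀ =
      ∑ s : Fin n, ∑ t : Fin n, K i s t • (xB k n M δ₀ s * xB k n M δ₀ t) := by
    intro i
    have h0 : πB k n M δ₀ (relz k n δ₀ i) = 0 := by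
      have := RingQuot.mkAlgHom_rel k (s := OreRel k n M δ₀) ⟨Or.inr ⟨i, rfl⟩, rfl⟩
      simpa [πB] using this
    unfold relz at h0
    rw [hK i] at h0
    simp only [map_sub, _root_.map_mul, map_sum, _root_.map_smul, TensorProduct.map_tmul, emb2_tmul] at h0
    rw [sub_sub, sub_eq_zero] at h0
    rw [xB, zB, h0]
    simp [xB]
  have hRHS0 : ∀ i, (∑ s : Fin n, ∑ t : Fin n,
      K i s t • (mkI (xB k n M δ₀ s) * mkI (xB k n M δ₀ t))) = 0 := by
    intro i
    rw [Finset.sum_eq_single xn]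
    · rw [Finset.sum_eq_single xn]
      · rw [hKnn, zero_smul]
      · intro t _ ht; rw [hx0 t ht, mul_zero, smul_zero]
      · simp
    · intro s _ hs
      apply Finset.sum_eq_zero
      intro t _
      rw [hx0 s hs, zero_mul, smul_zero]
    · simp
  have hcommuz : zz * u = u * zz := by
    have h := congrArg mkI (hzx xn)
    simp only [map_sub, _root_.map_mul, map_sum, _root_.map_smul] at h
    rw [hRHS0] at h
    rw [← hu, ← hzz] at h
    exact sub_eq_zero.mp h
  -- key formula for Ψ on generators
  have hkey : ∀ v : Vhat k n, Ψ (TensorAlgebra.ι k v) = v.1 xn • u + v.2 • zz := by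
    intro v
    have hv : TensorAlgebra.ι k (M := Vhat k n) v =
        TensorAlgebra.ι k (inc k n v.1) + v.2 • TensorAlgebra.ι k (zv k n) := by
      rw [← _root_.map_smul, ← map_add]
      congr 1
      simp [inc, zv, Prod.ext_iff]
    have hv1 : v.1 = ∑ i : Fin n, v.1 i • x k n i := by
      funext j
      simp [x, Finset.sum_apply, Pi.single_apply]
    rw [hv, map_add, _root_.map_smul]
    congr 1
    · conv_lhs => rw [hv1]
      simp only [map_sum, _root_.map_smul]
      have : ∀ i : Fin n, Ψ (TensorAlgebra.ι k (inc k n (x k n i))) = mkI (xB k n M δ₀ i) := by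
        intro i; simp [Ψ, xB]
      simp only [this]
      rw [Finset.sum_eq_single xn]
      · intro s _ hs; rw [hx0 s hs, smul_zero]
      · simp
  -- commutativity of the quotient
  have hsurj : Function.Surjective Ψ := by
    intro a
    obtain ⟨b, hb⟩ := RingQuot.mkAlgHom_surjective k (RelI k n M δ₀) a
    obtain ⟨t, ht⟩ := RingQuot.mkAlgHom_surjective k (OreRel k n M δ₀) b
    exact ⟨t, by simp [Ψ, πB, mkI, ht, hb]⟩
  have hιcomm : ∀ v w : Vhat k n,
      Ψ (TensorAlgebra.ι k v) * Ψ (TensorAlgebra.ι k w) =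
      Ψ (TensorAlgebra.ι k w) * Ψ (TensorAlgebra.ι k v) := by
    intro v w
    rw [hkey, hkey]
    simp only [add_mul, mul_add, smul_mul_assoc, mul_smul_comm]
    rw [hcommuz]
    module
  have hcent : ∀ (v : Vhat k n) (b : RingQuot (RelI k n M δ₀)),
      Ψ (TensorAlgebra.ι k v) * b = b * Ψ (TensorAlgebra.ι k v) := by
    intro v b
    obtain ⟨y, rfl⟩ := hsurj b
    induction y using TensorAlgebra.induction with
    | algebraMap r => rw [AlgHom.commutes]; exact (Algebra.commutes r _).symm
    | ι w => exact hιcomm v w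
    | mul a b ha hb =>
        rw [_root_.map_mul, ← mul_assoc, ha, mul_assoc, hb, ← mul_assoc]
    | add a b ha hb =>
        rw [map_add, mul_add, add_mul, ha, hb]
  have hcomm : ∀ a b : RingQuot (RelI k n M δ₀), a * b = b * a := by
    intro a b
    obtain ⟨y, rfl⟩ := hsurj a
    induction y using TensorAlgebra.induction with
    | algebraMap r => rw [AlgHom.commutes]; exact Algebra.commutes r b
    | ι v => exact hcent v b
    | mul p q hp hq => rw [_root_.map_mul, mul_assoc, hq, ← mul_assoc, hp, mul_assoc]
    | add p q hp hq => rw [map_add, add_mul, mul_add, hp, hq]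
  letI : CommRing (RingQuot (RelI k n M δ₀)) :=
    { (inferInstance : Ring (RingQuot (RelI k n M δ₀))) with mul_comm := hcomm }
  let G : MvPolynomial (Fin 2) k →ₐ[k] RingQuot (RelI k n M δ₀) :=
    MvPolynomial.aeval ![u, zz]
  have hG0 : G (MvPolynomial.X 0) = u := by simp [G]
  have hG1 : G (MvPolynomial.X 1) = zz := by simp [G]
  have hFG : F.comp G = AlgHom.id k (MvPolynomial (Fin 2) k) := by
    apply MvPolynomial.algHom_ext
    intro i
    fin_cases i
    · show F (G (MvPolynomial.X 0)) = MvPolynomial.X 0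
      rw [hG0, hFu]
    · show F (G (MvPolynomial.X 1)) = MvPolynomial.X 1
      rw [hG1, hFz]
  have hGF : G.comp F = AlgHom.id k (RingQuot (RelI k n M δ₀)) := by
    apply RingQuot.ringQuot_ext'
    apply RingQuot.ringQuot_ext'
    apply TensorAlgebra.hom_ext
    apply LinearMap.ext
    intro v
    have hFΨ : F (Ψ (TensorAlgebra.ι k v)) = v.1 xn • MvPolynomial.X 0 + v.2 • MvPolynomial.X 1 := by
      simp only [Ψ, AlgHom.comp_apply, mkI]
      rw [RingQuot.liftAlgHom_mkAlgHom_apply]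
      rw [hF1]
      simp [phiT, fLin, TensorAlgebra.lift_ι_apply]
    show G (F (Ψ (TensorAlgebra.ι k v))) = Ψ (TensorAlgebra.ι k v)
    rw [hFΨ, map_add, _root_.map_smul, _root_.map_smul, hG0, hG1, hkey]
  refine ⟨AlgEquiv.ofAlgHom F G hFG hGF, hFu, hFz⟩
end
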